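/- There exists N₀ such that for all n ≥ N₀, every (n, 2; D_1)-reconstruction code C ⊆ {0,1}^n satisfies |C| ≤ 4·2^n / log₂ n; equivalently, the redundancy n − log₂|C| of any (n,2;D_1)-reconstruction code is at least log₂ log₂ n − 2 for all sufficiently large n. -/

import Mathlib

open List


/-- The `t`-deletion ball of a binary word `x`: all subsequences of `x`
of length `|x| - t` (empty when `t > |x|`). -/
def deletionBall (t : ℕ) (x : List Bool) : Set (List Bool) :=
  {z | z.Sublist x ∧ z.length + t = x.length}

/-- `C` is an `(n, N; D_t)`-reconstruction code. -/
def IsReconCode (n N t : ℕ) (C : Set (List Bool)) : Prop :=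
  (∀ x ∈ C, x.length = n) ∧
  ∀ x ∈ C, ∀ y ∈ C, x ≠ y → (deletionBall t x ∩ deletionBall t y).ncard < N

def alt : ℕ → List Bool
  | 0 => []
  | k+1 => false :: true :: alt k

def pat (m i : ℕ) : List Bool := alt i ++ false :: alt (m - i)

@[simp] lemma alt_length (k : ℕ) : (alt k).length = 2 * k := by
  induction k with
  | zero => simp [alt]
  | succ k ih => simp [alt, ih]; omega

lemma alt_add (a b : ℕ) : alt (a + b) = alt a ++ alt b := by
  induction a with
  | zero => simp [alt]
  | succ a ih => simp [alt, Nat.succ_add, ih]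

lemma pat_length {m i : ℕ} (h : i ≤ m) : (pat m i).length = 2 * m + 1 := by
  simp [pat]; omega

@[simp] lemma alt_count_true (k : ℕ) : (alt k).count true = k := by
  induction k with
  | zero => simp [alt]
  | succ k ih => simp [alt, ih]

/-- the second common subsequence of `pat m i` and `pat m j`. -/
def cij (m i j : ℕ) : List Bool :=
  alt i ++ false :: (alt (j - i - 1) ++ false :: alt (m - j))

lemma pat_succ (m i : ℕ) (h : i + 1 ≤ m) :
    pat m (i + 1) = false :: true :: pat (m - 1) i := by
  simp [pat, alt]
  have : m - (i+1) = (m-1) - i := by omega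
  rw [this]

lemma pat_ne {m i j : ℕ} (hij : i < j) (hjm : j ≤ m) : pat m i ≠ pat m j := by
  induction i generalizing j m with
  | zero =>
    obtain ⟨j', rfl⟩ : ∃ j', j = j' + 1 := ⟨j - 1, by omega⟩
    rw [pat_succ _ _ hjm]
    have hm : 1 ≤ m := by omega
    obtain ⟨m', rfl⟩ : ∃ m', m = m' + 1 := ⟨m - 1, by omega⟩
    simp [pat, alt]
  | succ i ih =>
    obtain ⟨j', rfl⟩ : ∃ j', j = j' + 1 := ⟨j - 1, by omega⟩
    rw [pat_succ _ _ hjm, pat_succ _ _ (by omega)]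
    intro h
    injection h with h1 h
    injection h with h2 h
    exact ih (m := m - 1) (j := j') (by omega) (by omega) h

lemma alt_sublist_pat {m i : ℕ} (h : i ≤ m) : alt m <+ pat m i := by
  have halt : alt m = alt i ++ alt (m - i) := by
    rw [← alt_add]; congr 1; omega
  rw [halt, pat]
  exact ((sublist_cons_self false (alt (m-i)))).append_left (alt i)

lemma cij_sublist_left {m i j : ℕ} (hij : i < j) (hjm : j ≤ m) :
    cij m i j <+ pat m i := by
  have h1 : m - i = (j - i - 1) + (1 + (m - j)) := by omega
  rw [pat, h1, alt_add]
  apply Sublist.append_left _ (alt i)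
  apply Sublist.cons₂
  apply Sublist.append_left _ (alt (j - i - 1))
  show false :: alt (m - j) <+ alt (1 + (m - j))
  rw [show (1 : ℕ) + (m - j) = (m - j) + 1 by omega]
  show false :: alt (m - j) <+ false :: true :: alt (m - j)
  exact (sublist_cons_self true _).cons₂ false

lemma cij_sublist_right {m i j : ℕ} (hij : i < j) (hjm : j ≤ m) :
    cij m i j <+ pat m j := by
  have hj : pat m j = alt i ++ (false :: true :: (alt (j - i - 1) ++ false :: alt (m - j))) := by
    rw [pat]
    have : alt j = alt i ++ alt (j - i - 1 + 1) := by
      rw [← alt_add]; congr 1; omega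
    rw [this, show alt (j - i - 1 + 1) = false :: true :: alt (j - i - 1) from rfl]
    simp
  rw [hj, cij]
  apply Sublist.append_left _ (alt i)
  show false :: (alt (j-i-1) ++ false :: alt (m-j)) <+
    (false :: true :: alt (j - i - 1)) ++ false :: alt (m - j)
  show false :: (alt (j-i-1) ++ false :: alt (m-j)) <+
    false :: (true :: (alt (j - i - 1) ++ false :: alt (m - j)))
  exact (sublist_cons_self true _).cons₂ false

lemma cij_length {m i j : ℕ} (hij : i < j) (hjm : j ≤ m) :
    (cij m i j).length = 2 * m := by
  simp [cij]; omega

lemma cij_count {m i j : ℕ} (hij : i < j) (hjm : j ≤ m) :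
    (cij m i j).count true = m - 1 := by
  simp [cij]; omega

lemma deletionBall_finite (t : ℕ) (x : List Bool) : (deletionBall t x).Finite := by
  apply Set.Finite.subset (x.sublists.toFinset.finite_toSet)
  intro z hz
  simp [List.mem_sublists]
  exact hz.1

/-- key: two distinct codewords of shape `u ++ pat m _ ++ v` are confusable. -/
lemma confus_false {n m i j : ℕ} {C : Set (List Bool)} (hC : IsReconCode n 2 1 C)
    (hij : i < j) (hjm : j ≤ m) (u v : List Bool)
    (hx : u ++ pat m i ++ v ∈ C) (hy : u ++ pat m j ++ v ∈ C) : False := by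
  set x := u ++ pat m i ++ v with hxdef
  set y := u ++ pat m j ++ v with hydef
  have hne : x ≠ y := by
    intro h
    have h2 : pat m i ++ v = pat m j ++ v := by
      rw [hxdef, hydef, List.append_assoc, List.append_assoc] at h
      exact List.append_cancel_left h
    have h3 : pat m i = pat m j := List.append_cancel_right h2
    exact pat_ne hij hjm h3
  have hlt := hC.2 x hx y hy hne
  -- two common elements
  have hxl : x.length = u.length + (2*m+1) + v.length := by
    simp [hxdef, pat_length (le_trans hij.le hjm)]; omega
  have hyl : y.length = u.length + (2*m+1) + v.length := by
    simp [hydef, pat_length hjm]; omega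
  set z₁ := u ++ alt m ++ v with hz1
  set z₂ := u ++ cij m i j ++ v with hz2
  have hz1x : z₁ ∈ deletionBall 1 x := by
    constructor
    · exact ((alt_sublist_pat (le_trans hij.le hjm)).append_left u).append_right v
    · simp [hz1, hxl]; omega
  have hz1y : z₁ ∈ deletionBall 1 y := by
    constructor
    · exact ((alt_sublist_pat hjm).append_left u).append_right v
    · simp [hz1, hyl]; omega
  have hz2x : z₂ ∈ deletionBall 1 x := by
    constructor
    · exact ((cij_sublist_left hij hjm).append_left u).append_right v
    · simp [hz2, hxl, cij_length hij hjm]; omega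
  have hz2y : z₂ ∈ deletionBall 1 y := by
    constructor
    · exact ((cij_sublist_right hij hjm).append_left u).append_right v
    · simp [hz2, hyl, cij_length hij hjm]; omega
  have hzne : z₁ ≠ z₂ := by
    intro h
    have h1 : z₁.count true = z₂.count true := by rw [h]
    have hm : 1 ≤ m := by omega
    simp [hz1, hz2, List.count_append, cij_count hij hjm] at h1
    omega
  have hfin : (deletionBall 1 x ∩ deletionBall 1 y).Finite :=
    (deletionBall_finite 1 x).inter_of_left _
  have h2 : 1 < (deletionBall 1 x ∩ deletionBall 1 y).ncard := by
    rw [Set.one_lt_ncard hfin]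
    exact ⟨z₁, ⟨hz1x, hz1y⟩, z₂, ⟨hz2x, hz2y⟩, hzne⟩
  omega

/-! ### Counting words -/

def words : ℕ → Finset (List Bool)
  | 0 => {[]}
  | s+1 => (words s).image (List.cons false) ∪ (words s).image (List.cons true)

lemma mem_words {s : ℕ} {x : List Bool} : x ∈ words s ↔ x.length = s := by
  induction s generalizing x with
  | zero => simp [words, List.length_eq_zero_iff]
  | succ s ih =>
    constructor
    · intro hx
      rw [words] at hx
      rcases Finset.mem_union.mp hx with h | h <;>
        · obtain ⟨y, hy, rfl⟩ := Finset.mem_image.mp h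
          simp [ih.mp hy]
    · intro hl
      cases x with
      | nil => simp at hl
      | cons a x =>
        have hx : x ∈ words s := ih.mpr (by simpa using hl)
        rw [words]
        cases a
        · exact Finset.mem_union_left _ (Finset.mem_image_of_mem _ hx)
        · exact Finset.mem_union_right _ (Finset.mem_image_of_mem _ hx)

lemma card_words (s : ℕ) : (words s).card = 2 ^ s := by
  induction s with
  | zero => simp [words]
  | succ s ih =>
    rw [words, Finset.card_union_of_disjoint, Finset.card_image_of_injective _ (List.cons_injective),
      Finset.card_image_of_injective _ (List.cons_injective), ih]
    · ring
    · rw [Finset.disjoint_left]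
      intro a ha hb
      obtain ⟨y, _, rfl⟩ := Finset.mem_image.mp ha
      obtain ⟨z, _, h⟩ := Finset.mem_image.mp hb
      simp at h

/-! ### the pattern family and block counting -/

def Wf (m : ℕ) : Finset (List Bool) := (Finset.range (m+1)).image (pat m)

def badB (m : ℕ) : Finset (List Bool) := (words (2*m+1)).filter (fun x => x ∉ Wf m)

def avoid (m : ℕ) : ℕ → ℕ → Finset (List Bool)
  | 0, r => words r
  | b+1, r => ((badB m) ×ˢ avoid m b r).image fun p => p.1 ++ p.2

lemma card_Wf (m : ℕ) : (Wf m).card = m + 1 := by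
  rw [Wf, Finset.card_image_of_injOn, Finset.card_range]
  intro i hi j hj hij
  simp only [Finset.coe_range, Set.mem_Iio] at hi hj
  rcases lt_trichotomy i j with h | h | h
  · exact absurd hij (pat_ne h (by omega))
  · exact h
  · exact absurd hij.symm (pat_ne h (by omega))

lemma Wf_subset (m : ℕ) : Wf m ⊆ words (2*m+1) := by
  intro x hx
  simp only [Wf, Finset.mem_image, Finset.mem_range] at hx
  obtain ⟨i, hi, rfl⟩ := hx
  exact mem_words.mpr (pat_length (by omega))

lemma card_badB (m : ℕ) : (badB m).card = 2 ^ (2*m+1) - (m+1) := by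
  classical
  have h := Finset.card_filter_add_card_filter_not
    (s := words (2*m+1)) (p := fun x => x ∈ Wf m)
  have h2 : (words (2*m+1)).filter (fun x => x ∈ Wf m) = Wf m := by
    apply Finset.Subset.antisymm
    · intro x hx; exact (Finset.mem_filter.mp hx).2
    · intro x hx; exact Finset.mem_filter.mpr ⟨Wf_subset m hx, hx⟩
  rw [h2, card_Wf, card_words] at h
  have h3 : (badB m).card = (Finset.filter (fun a => ¬ a ∈ Wf m) (words (2*m+1))).card := rfl
  omega

lemma len_badB {m : ℕ} {x : List Bool} (h : x ∈ badB m) : x.length = 2*m+1 :=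
  mem_words.mp (Finset.mem_filter.mp h).1

lemma len_avoid {m b r : ℕ} {x : List Bool} (h : x ∈ avoid m b r) :
    x.length = (2*m+1) * b + r := by
  induction b generalizing x with
  | zero => simpa using mem_words.mp (by simpa [avoid] using h)
  | succ b ih =>
    simp only [avoid, Finset.mem_image, Finset.mem_product] at h
    obtain ⟨⟨a, c⟩, ⟨ha, hc⟩, rfl⟩ := h
    simp [len_badB ha, ih hc]; ring

lemma card_avoid (m b r : ℕ) : (avoid m b r).card = (badB m).card ^ b * 2 ^ r := by
  induction b with
  | zero => simp [avoid, card_words]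
  | succ b ih =>
    rw [avoid, Finset.card_image_of_injOn, Finset.card_product, ih, pow_succ]
    · ring
    · rintro ⟨a, c⟩ h ⟨a', c'⟩ h' heq
      simp only [Finset.coe_product, Set.mem_prod, Finset.mem_coe] at h h'
      have hl : a.length = a'.length := by rw [len_badB h.1, len_badB h'.1]
      have heq' : a ++ c = a' ++ c' := heq
      obtain ⟨h1, h2⟩ := List.append_inj heq' hl
      exact Prod.ext h1 h2

lemma mem_avoid_of {m b r : ℕ} {x : List Bool} (hlen : x.length = (2*m+1) * b + r)
    (hblk : ∀ j < b, (x.drop ((2*m+1) * j)).take (2*m+1) ∉ Wf m) :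
    x ∈ avoid m b r := by
  induction b generalizing x with
  | zero => simpa [avoid] using mem_words.mpr (by simpa using hlen)
  | succ b ih =>
    set L := 2*m+1 with hL
    rw [Nat.mul_succ] at hlen
    simp only [avoid, Finset.mem_image, Finset.mem_product]
    refine ⟨(x.take L, x.drop L), ⟨?_, ?_⟩, by simp⟩
    · refine Finset.mem_filter.mpr ⟨mem_words.mpr ?_, ?_⟩
      · rw [List.length_take]; omega
      · have := hblk 0 (by omega)
        simpa using this
    · apply ih
      · rw [List.length_drop]; omega
      · intro j hj
        rw [List.drop_drop]
        have := hblk (j+1) (by omega)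
        have hsh : L + L * j = L * (j+1) := by ring
        rw [hsh]
        exact this

/-! ### list block helper lemmas -/

lemma take_blk {L a j : ℕ} (x : List Bool) (h : L * (j+1) ≤ a) :
    ((x.take a).drop (L*j)).take L = (x.drop (L*j)).take L := by
  rw [List.drop_take, List.take_take]
  have h' : L * j + L ≤ a := by rw [Nat.mul_succ] at h; exact h
  congr 1
  omega

lemma blk_append {u w : List Bool} (L j : ℕ) (h : L * (j+1) ≤ u.length) :
    ((u ++ w).drop (L*j)).take L = (u.drop (L*j)).take L := by
  rw [List.drop_append, List.take_append]
  have h' : L * j + L ≤ u.length := by rw [Nat.mul_succ] at h; exact h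
  have h2 : L * j - u.length = 0 := by omega
  have h3 : L - (u.drop (L*j)).length = 0 := by rw [List.length_drop]; omega
  rw [h2, h3]
  simp

lemma blk_at (u w v : List Bool) : ((u ++ w ++ v).drop u.length).take w.length = w := by
  rw [List.append_assoc, List.drop_append]
  simp [List.take_append]

lemma img_take (u w v : List Bool) : (u ++ w ++ v).take u.length = u := by
  rw [List.append_assoc, List.take_append]
  simp

lemma img_drop2 (u w v : List Bool) : (u ++ w ++ v).drop (u.length + w.length) = v := by
  rw [List.append_assoc, List.drop_append]
  have h1 : u.length + w.length - u.length = w.length := by omega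
  rw [h1, List.drop_append]
  simp

lemma blk_at' {u w : List Bool} {a c : ℕ} (v : List Bool) (hu : u.length = a)
    (hw : w.length = c) : ((u ++ w ++ v).drop a).take c = w := by
  subst hu; subst hw; exact blk_at u w v

lemma img_take' {u : List Bool} {a : ℕ} (w v : List Bool) (hu : u.length = a) :
    (u ++ w ++ v).take a = u := by
  subst hu; exact img_take u w v

lemma img_drop2' {u w : List Bool} {a c : ℕ} (v : List Bool) (hu : u.length = a)
    (hw : w.length = c) : (u ++ w ++ v).drop (a + c) = v := by
  subst hu; subst hw; exact img_drop2 u w v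

lemma decomp (x : List Bool) (a Lc : ℕ) :
    x = x.take a ++ (x.drop a).take Lc ++ x.drop (a + Lc) := by
  conv_lhs => rw [← List.take_append_drop a x]
  rw [List.append_assoc]
  congr 1
  conv_lhs => rw [← List.take_append_drop Lc (x.drop a)]
  rw [List.drop_drop]

/-! ### the good-block predicate -/

def Pgood (m B : ℕ) (x : List Bool) (b : ℕ) : Prop :=
  b < B ∧ (x.drop ((2*m+1)*b)).take (2*m+1) ∈ Wf m

instance Pgood.dec (m B : ℕ) (x : List Bool) (b : ℕ) : Decidable (Pgood m B x b) := by
  unfold Pgood; infer_instance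

lemma pat0_mem (m : ℕ) : pat m 0 ∈ Wf m :=
  Finset.mem_image.mpr ⟨0, Finset.mem_range.mpr (by omega), rfl⟩

/-! ### the main counting bound -/

lemma main_count (n m : ℕ) (C : Set (List Bool)) (hC : IsReconCode n 2 1 C) :
    C.ncard ≤ ∑ b ∈ Finset.range (n / (2*m+1)),
        (badB m).card ^ b * 2 ^ (n - (2*m+1) * (b+1))
      + (badB m).card ^ (n / (2*m+1)) * 2 ^ (n - (2*m+1) * (n / (2*m+1))) := by
  classical
  set L := 2*m+1 with hL
  set B := n / L with hB
  have hLpos : 0 < L := by omega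
  have hLBn : L * B ≤ n := by rw [hB, mul_comm]; exact Nat.div_mul_le_self n L
  have hpatlen : ∀ i, i ≤ m → (pat m i).length = L := fun i hi => pat_length hi
  -- the injection
  set f : List Bool → List Bool := fun x =>
    if h : ∃ b, Pgood m B x b then
      x.take (L * Nat.find h) ++ pat m 0 ++ x.drop (L * Nat.find h + L)
    else x with hf
  have hfgood : ∀ x (h : ∃ b, Pgood m B x b),
      f x = x.take (L * Nat.find h) ++ pat m 0 ++ x.drop (L * Nat.find h + L) := by
    intro x h
    simp only [hf]
    rw [dif_pos h]
  have hfbad : ∀ x, ¬ (∃ b, Pgood m B x b) → f x = x := by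
    intro x h
    simp only [hf]
    rw [dif_neg h]
  -- lengths of takes
  have htklen : ∀ (x : List Bool), x.length = n → ∀ b, b < B →
      (x.take (L*b)).length = L*b := by
    intro x hxn b hb
    rw [List.length_take, hxn]
    have : L * b ≤ L * B := Nat.mul_le_mul_left L (le_of_lt hb)
    omega
  -- block structure of f x for good x
  have hblocks : ∀ x, x.length = n → ∀ (h : ∃ b, Pgood m B x b),
      (((f x).drop (L * Nat.find h)).take L = pat m 0) ∧
      (∀ j, j < Nat.find h → ((f x).drop (L*j)).take L = (x.drop (L*j)).take L) ∧
      ((f x).take (L * Nat.find h) = x.take (L * Nat.find h)) ∧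
      ((f x).drop (L * Nat.find h + L) = x.drop (L * Nat.find h + L)) := by
    intro x hxn h
    set b := Nat.find h with hbdef
    have hbB : b < B := (Nat.find_spec h).1
    have hulen : (x.take (L*b)).length = L*b := htklen x hxn b hbB
    have h0len : (pat m 0).length = L := hpatlen 0 (by omega)
    rw [hfgood x h]
    refine ⟨?_, ?_, ?_, ?_⟩
    · exact blk_at' _ hulen h0len
    · intro j hj
      rw [List.append_assoc]
      have hj' : L * (j+1) ≤ (x.take (L*b)).length := by
        rw [hulen]
        exact Nat.mul_le_mul_left L (by omega)
      rw [blk_append L j hj']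
      rw [take_blk x (by rw [hulen] at hj'; exact hj')]
    · exact img_take' _ _ hulen
    · exact img_drop2' _ hulen h0len
  -- no find below find' when images equal
  have hfindle : ∀ x, x.length = n → ∀ x', x'.length = n → ∀ (h : ∃ b, Pgood m B x b)
      (h' : ∃ b, Pgood m B x' b), f x = f x' →
      ¬ (Nat.find h < Nat.find h') := by
    intro x hxn x' hx'n h h' hfeq hlt
    have h1 := (hblocks x hxn h).1
    have h2 := (hblocks x' hx'n h').2.1 _ hlt
    rw [hfeq] at h1
    rw [h1] at h2
    exact Nat.find_min h' hlt ⟨(Nat.find_spec h).1, h2 ▸ pat0_mem m⟩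
  -- injectivity on C
  have hinj : Set.InjOn f C := by
    intro x hx x' hx' hfeq
    have hxn : x.length = n := hC.1 x hx
    have hx'n : x'.length = n := hC.1 x' hx'
    by_cases h : ∃ b, Pgood m B x b
    · by_cases h' : ∃ b, Pgood m B x' b
      · have hbb : Nat.find h = Nat.find h' := by
          rcases lt_trichotomy (Nat.find h) (Nat.find h') with hlt | he | hlt
          · exact absurd hlt (hfindle x hxn x' hx'n h h' hfeq)
          · exact he
          · exact absurd hlt (hfindle x' hx'n x hxn h' h hfeq.symm)
        have hbB : Nat.find h < B := (Nat.find_spec h).1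
        have hU : x.take (L * Nat.find h) = x'.take (L * Nat.find h) := by
          have e1 := (hblocks x hxn h).2.2.1
          have e2 := (hblocks x' hx'n h').2.2.1
          rw [← hbb] at e2
          rw [hfeq] at e1
          rw [← e1, e2]
        have hV : x.drop (L * Nat.find h + L) = x'.drop (L * Nat.find h + L) := by
          have e1 := (hblocks x hxn h).2.2.2
          have e2 := (hblocks x' hx'n h').2.2.2
          rw [← hbb] at e2
          rw [hfeq] at e1
          rw [← e1, e2]
        have hpx : (x.drop (L * Nat.find h)).take L ∈ Wf m := by
          have h2 := (Nat.find_spec h).2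
          rw [← hL] at h2
          exact h2
        have hpx' : (x'.drop (L * Nat.find h)).take L ∈ Wf m := by
          have h2 := (Nat.find_spec h').2
          rw [← hL, ← hbb] at h2
          exact h2
        obtain ⟨i, hir, hpi⟩ := Finset.mem_image.mp hpx
        obtain ⟨i', hir', hpi'⟩ := Finset.mem_image.mp hpx'
        rw [Finset.mem_range] at hir hir'
        have hdx : x = x.take (L * Nat.find h) ++ pat m i ++ x.drop (L * Nat.find h + L) := by
          conv_lhs => rw [decomp x (L * Nat.find h) L]
          rw [hpi]
        have hdx' : x' = x'.take (L * Nat.find h) ++ pat m i' ++ x'.drop (L * Nat.find h + L) := by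
          conv_lhs => rw [decomp x' (L * Nat.find h) L]
          rw [hpi']
        rcases lt_trichotomy i i' with hii | hii | hii
        · exfalso
          rw [hdx] at hx
          rw [hdx', ← hU, ← hV] at hx'
          exact confus_false hC hii (by omega) _ _ hx hx'
        · rw [hdx, hdx', ← hU, ← hV, hii]
        · exfalso
          rw [hdx] at hx
          rw [hdx', ← hU, ← hV] at hx'
          exact confus_false hC hii (by omega) _ _ hx' hx
      · exfalso
        have h1 := (hblocks x hxn h).1
        have hfx' : f x' = x' := hfbad x' h'
        rw [hfeq, hfx'] at h1
        exact h' ⟨Nat.find h, (Nat.find_spec h).1, h1 ▸ pat0_mem m⟩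
    · by_cases h' : ∃ b, Pgood m B x' b
      · exfalso
        have h1 := (hblocks x' hx'n h').1
        have hfx : f x = x := hfbad x h
        rw [← hfeq, hfx] at h1
        exact h ⟨Nat.find h', (Nat.find_spec h').1, h1 ▸ pat0_mem m⟩
      · rw [hfbad x h, hfbad x' h'] at hfeq
        exact hfeq
  -- the target finset
  set T : Finset (List Bool) :=
    ((Finset.range B).biUnion fun b =>
      ((avoid m b 0) ×ˢ words (n - L*(b+1))).image fun p => p.1 ++ pat m 0 ++ p.2)
    ∪ avoid m B (n - L * B) with hT
  have hmaps : ∀ x ∈ C, f x ∈ T := by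
    intro x hx
    have hxn : x.length = n := hC.1 x hx
    by_cases h : ∃ b, Pgood m B x b
    · rw [hfgood x h]
      apply Finset.mem_union_left
      apply Finset.mem_biUnion.mpr
      have hbB : Nat.find h < B := (Nat.find_spec h).1
      refine ⟨Nat.find h, Finset.mem_range.mpr hbB, ?_⟩
      apply Finset.mem_image.mpr
      refine ⟨(x.take (L * Nat.find h), x.drop (L * Nat.find h + L)),
        Finset.mem_product.mpr ⟨?_, ?_⟩, rfl⟩
      · apply mem_avoid_of
        · rw [htklen x hxn _ hbB, ← hL]; omega
        · intro j hj hmem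
          rw [← hL] at hmem
          have hj' : L * (j+1) ≤ L * Nat.find h := Nat.mul_le_mul_left L (by omega)
          rw [take_blk x hj'] at hmem
          exact Nat.find_min h hj ⟨lt_trans hj hbB, hmem⟩
      · apply mem_words.mpr
        rw [List.length_drop, hxn, Nat.mul_succ]
    · rw [hfbad x h]
      apply Finset.mem_union_right
      apply mem_avoid_of
      · rw [hxn, ← hL]; omega
      · intro j hj hmem
        exact h ⟨j, hj, hmem⟩
  -- cardinality chain
  have h1 : C.ncard ≤ T.card := by
    rw [← Set.ncard_coe_finset]
    exact Set.ncard_le_ncard_of_injOn f hmaps hinj T.finite_toSet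
  refine le_trans h1 ?_
  refine le_trans (Finset.card_union_le _ _) ?_
  have h2 : ((Finset.range B).biUnion fun b =>
      ((avoid m b 0) ×ˢ words (n - L*(b+1))).image fun p => p.1 ++ pat m 0 ++ p.2).card
      ≤ ∑ b ∈ Finset.range B, (badB m).card ^ b * 2 ^ (n - L*(b+1)) := by
    refine le_trans Finset.card_biUnion_le (Finset.sum_le_sum ?_)
    intro b hb
    refine le_trans Finset.card_image_le ?_
    rw [Finset.card_product, card_avoid, card_words, pow_zero, mul_one]
  have h3 : (avoid m B (n - L * B)).card = (badB m).card ^ B * 2 ^ (n - L * B) :=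
    card_avoid m B (n - L * B)
  omega

/-! ### auxiliary numeric lemmas -/

lemma aux1 : ∀ s : ℕ, 8 ≤ s → 8*s + 16 ≤ 2^s := by
  intro s hs
  induction s with
  | zero => omega
  | succ s ih =>
    rcases Nat.lt_or_ge s 8 with h | h
    · interval_cases s <;> simp_all <;> omega
    · have := ih h
      have h2 : 8 ≤ 2^s := le_trans (by omega) this
      rw [pow_succ]
      omega

lemma aux2 : ∀ t : ℕ, 4 ≤ t → 2*(t+1) ≤ 2^t := by
  intro t ht
  induction t with
  | zero => omega
  | succ t ih =>
    rcases Nat.lt_or_ge t 4 with h | h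
    · have ht3 : t = 3 := by omega
      subst ht3; norm_num
    · have := ih h
      rw [pow_succ]
      omega

/-- the key natural-number inequality for the second error term. -/
lemma key_ineq (n t s m L B : ℕ) (ht : Nat.log 2 n = t) (hs : Nat.log 2 t = s)
    (hm : m = (t - 2*s)/2) (hLdef : L = 2*m+1) (hBdef : B = n / L)
    (ht500 : 500 ≤ t) :
    (t+1) * 2^L ≤ B * (m+1) := by
  have hn0 : n ≠ 0 := by
    intro h; rw [h, Nat.log_zero_right] at ht; omega
  have hnt : 2^t ≤ n := ht ▸ Nat.pow_log_le_self 2 hn0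
  have hts : 2^s ≤ t := by
    rw [← hs]; exact Nat.pow_log_le_self 2 (by omega)
  have hts2 : t < 2^(s+1) := by
    rw [← hs]; exact Nat.lt_pow_succ_log_self (by norm_num) t
  have hs8 : 8 ≤ s := by
    by_contra h
    push_neg at h
    have : 2^(s+1) ≤ 2^8 := Nat.pow_le_pow_right (by norm_num) (by omega)
    simp at this
    omega
  have hst : 8*s + 16 ≤ t := le_trans (aux1 s hs8) hts
  have hdm := Nat.div_add_mod (t - 2*s) 2
  have hmod : (t - 2*s) % 2 < 2 := Nat.mod_lt _ (by omega)
  have hm2a : 2*m ≤ t - 2*s := by omega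
  have hm2b : t - 2*s ≤ 2*m + 1 := by omega
  have hLt : L ≤ t + 1 := by omega
  have h2L : 2*L ≤ n := by
    have := aux2 t (by omega)
    omega
  -- f1 : t*t*2^L ≤ 8*n
  have f1 : t*t*2^L ≤ 8*n := by
    have e1 : t*t ≤ 2^(2*s+2) := by
      calc t*t ≤ 2^(s+1) * 2^(s+1) := Nat.mul_le_mul (le_of_lt hts2) (le_of_lt hts2)
      _ = 2^(2*s+2) := by rw [← pow_add]; ring_nf
    have e2 : 2^L ≤ 2^(t - 2*s + 1) := Nat.pow_le_pow_right (by norm_num) (by omega)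
    calc t*t*2^L ≤ 2^(2*s+2) * 2^(t - 2*s + 1) := Nat.mul_le_mul e1 e2
    _ = 2^((2*s+2) + (t - 2*s + 1)) := by rw [← pow_add]
    _ = 2^(t+3) := by congr 1; omega
    _ = 8 * 2^t := by rw [show t+3 = 3+t by omega, pow_add]; norm_num
    _ ≤ 8 * n := by omega
  have f4 : n < B*L + L := by
    have h1 := Nat.div_add_mod n L
    have h2 : n % L < L := Nat.mod_lt _ (by omega)
    have h3 : B * L = L * (n / L) := by rw [hBdef, Nat.mul_comm]
    omega
  have ht3 : 2*t+1 ≤ t*t := by nlinarith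
  have key : (t+1)*2^L*(2*L*(t*t)) ≤ B*(m+1)*(2*L*(t*t)) := by
    have e2 : 32*n ≤ 64*(n-L) := by omega
    have e1 : 64 ≤ t - 2*s + 1 := by omega
    have e3 : t - 2*s + 1 ≤ 2*(m+1) := by omega
    have e4 : n - L ≤ B*L := by omega
    calc (t+1)*2^L*(2*L*(t*t)) = 2*L*((t+1)*(t*t*2^L)) := by ring
    _ ≤ 2*L*((t+1)*(8*n)) := by
        refine Nat.mul_le_mul_left _ (Nat.mul_le_mul_left _ f1)
    _ = 16*(L*((t+1)*n)) := by ring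
    _ ≤ 16*((t+1)*((t+1)*n)) := by
        refine Nat.mul_le_mul_left _ (Nat.mul_le_mul_right _ hLt)
    _ ≤ 32*((t*t)*n) := by nlinarith
    _ = 32*n*(t*t) := by ring
    _ ≤ (64*(n-L))*(t*t) := Nat.mul_le_mul_right _ e2
    _ ≤ ((t-2*s+1)*(n-L))*(t*t) := Nat.mul_le_mul_right _ (Nat.mul_le_mul_right _ e1)
    _ ≤ ((2*(m+1))*(B*L))*(t*t) := Nat.mul_le_mul_right _ (Nat.mul_le_mul e3 e4)
    _ = B*(m+1)*(2*L*(t*t)) := by ring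
  have hpos : 0 < 2*L*(t*t) :=
    Nat.mul_pos (by omega) (Nat.mul_pos (by omega) (by omega))
  exact Nat.le_of_mul_le_mul_right key hpos

lemma params (n t s m L B : ℕ) (ht : Nat.log 2 n = t) (hs : Nat.log 2 t = s)
    (hm : m = (t - 2*s)/2) (hLdef : L = 2*m+1) (hBdef : B = n / L)
    (ht500 : 500 ≤ t) :
    t+1 ≤ 3*(m+1) ∧ 1 ≤ m ∧ 1 ≤ B ∧ m+1 ≤ 2^L ∧ n < 2^(t+1) ∧ L*B ≤ n ∧
      (∀ b, b < B → L*(b+1) ≤ n) ∧ 2 ≤ n := by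
  have hn0 : n ≠ 0 := by
    intro h; rw [h, Nat.log_zero_right] at ht; omega
  have hnt : 2^t ≤ n := ht ▸ Nat.pow_log_le_self 2 hn0
  have hnt2 : n < 2^(t+1) := by
    rw [← ht]; exact Nat.lt_pow_succ_log_self (by norm_num) n
  have hts : 2^s ≤ t := by
    rw [← hs]; exact Nat.pow_log_le_self 2 (by omega)
  have hs8 : 8 ≤ s := by
    by_contra h
    push_neg at h
    have h2 : t < 2^(s+1) := by
      rw [← hs]; exact Nat.lt_pow_succ_log_self (by norm_num) t
    have : 2^(s+1) ≤ 2^8 := Nat.pow_le_pow_right (by norm_num) (by omega)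
    simp at this
    omega
  have hst : 8*s + 16 ≤ t := le_trans (aux1 s hs8) hts
  have hdm := Nat.div_add_mod (t - 2*s) 2
  have hmod : (t - 2*s) % 2 < 2 := Nat.mod_lt _ (by omega)
  have hm2a : 2*m ≤ t - 2*s := by omega
  have hm2b : t - 2*s ≤ 2*m + 1 := by omega
  have hLt : L ≤ t + 1 := by omega
  have h2L : 2*L ≤ n := by
    have := aux2 t (by omega)
    omega
  have hm1 : 1 ≤ m := by omega
  have hB1 : 1 ≤ B := by
    rw [hBdef]
    rw [Nat.le_div_iff_mul_le (by omega)]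
    omega
  have hmL : m + 1 ≤ 2^L := by
    have h1 : m < 2^m := Nat.lt_two_pow_self
    have h2 : (2:ℕ)^m ≤ 2^L := Nat.pow_le_pow_right (by norm_num) (by omega)
    omega
  have hLB : L*B ≤ n := by
    rw [hBdef, mul_comm]
    exact Nat.div_mul_le_self n L
  refine ⟨by omega, hm1, hB1, hmL, hnt2, hLB, ?_, by omega⟩
  intro b hb
  calc L*(b+1) ≤ L*B := Nat.mul_le_mul_left L (by omega)
  _ ≤ n := hLB


/-- For all sufficiently large `n`, every `(n, 2; D_1)`-reconstruction code `C`
satisfies `|C| ≤ 4·2^n / log₂ n`; equivalently its redundancy is at least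
`log₂ log₂ n − 2`. -/
theorem stmt8 :
    ∃ N₀ : ℕ, ∀ n : ℕ, N₀ ≤ n → ∀ C : Set (List Bool), IsReconCode n 2 1 C →
      (C.ncard : ℝ) ≤ 4 * 2 ^ n / Real.logb 2 n := by
  refine ⟨2^500, ?_⟩
  intro n hn C hC
  set t := Nat.log 2 n with htdef
  have ht500 : 500 ≤ t := by
    rw [htdef]
    calc (500:ℕ) = Nat.log 2 (2^500) := (Nat.log_pow (by norm_num) 500).symm
    _ ≤ Nat.log 2 n := Nat.log_mono_right hn
  set s := Nat.log 2 t with hsdef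
  set m := (t - 2*s)/2 with hmdef
  set L := 2*m+1 with hLdef
  set B := n / L with hBdef
  obtain ⟨p1, p2, p3, p4, p5, p6, p7, p8⟩ :=
    params n t s m L B htdef.symm hsdef.symm hmdef hLdef hBdef ht500
  have pG : (t+1) * 2^L ≤ B * (m+1) :=
    key_ineq n t s m L B htdef.symm hsdef.symm hmdef hLdef hBdef ht500
  -- the natural number bound
  have hcount := main_count n m C hC
  rw [← hLdef, ← hBdef] at hcount
  clear_value B L m s t
  set Q := (badB m).card with hQdef
  have hQ : Q = 2^L - (m+1) := by rw [hQdef, card_badB, ← hLdef]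
  have hQlt : Q < 2^L := by omega
  -- move to the reals
  have h2Lpos : (0:ℝ) < 2^L := by positivity
  have hc0 : (C.ncard : ℝ) ≤
      ∑ b ∈ Finset.range B, (Q:ℝ)^b * (2:ℝ)^(n - L*(b+1)) + (Q:ℝ)^B * (2:ℝ)^(n - L*B) := by
    have := (Nat.cast_le (α := ℝ)).mpr hcount
    push_cast at this
    exact this
  obtain ⟨q, hqdef⟩ : ∃ q : ℝ, q = (Q:ℝ)/2^L := ⟨_, rfl⟩
  have hq0 : 0 ≤ q := by rw [hqdef]; positivity
  have hq1 : q < 1 := by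
    rw [hqdef, div_lt_one h2Lpos]
    exact_mod_cast hQlt
  have hQr : (Q:ℝ) = 2^L - (m+1) := by
    rw [hQ]
    push_cast [p4]
    ring
  have h1mq : 1 - q = ((m:ℝ)+1)/2^L := by
    rw [hqdef, hQr]
    field_simp
    ring
  -- first sum
  have hterm : ∀ b ∈ Finset.range B,
      (Q:ℝ)^b * (2:ℝ)^(n - L*(b+1)) = (2^n/2^L) * q^b := by
    intro b hb
    have hble : L*(b+1) ≤ n := p7 b (Finset.mem_range.mp hb)
    have a1 : n - L*(b+1) + L*(b+1) = n := by omega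
    have e1 : (2:ℝ)^(n - L*(b+1)) * 2^(L*(b+1)) = 2^n := by
      rw [← pow_add, a1]
    have a2 : L*(b+1) = L*b + L := by ring
    have e2 : (2:ℝ)^(L*(b+1)) = 2^(L*b) * 2^L := by
      rw [a2, pow_add]
    have e3 : q^b = (Q:ℝ)^b / 2^(L*b) := by
      rw [hqdef, div_pow, ← pow_mul]
    have e4 : (2:ℝ)^(n - L*(b+1)) = 2^n / (2^(L*b) * 2^L) := by
      rw [← e2, eq_div_iff (by positivity), e1]
    rw [e4, e3]
    have hpb : ((2:ℝ)^(L*b)) ≠ 0 := by positivity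
    field_simp
  have hsum1 : ∑ b ∈ Finset.range B, (Q:ℝ)^b * (2:ℝ)^(n - L*(b+1))
      ≤ (2:ℝ)^n / ((m:ℝ)+1) := by
    rw [Finset.sum_congr rfl hterm, ← Finset.mul_sum]
    have hgeo : ∑ b ∈ Finset.range B, q^b ≤ 1/(1-q) := by
      have hne : q ≠ 1 := ne_of_lt hq1
      rw [geom_sum_eq hne]
      have heq : (q^B - 1)/(q - 1) = (1 - q^B)/(1 - q) := by
        rw [← neg_sub (1:ℝ) (q^B), ← neg_sub (1:ℝ) q, neg_div_neg_eq]
      rw [heq]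
      exact (div_le_div_iff_of_pos_right (by linarith)).mpr (sub_le_self _ (pow_nonneg hq0 B))
    calc (2:ℝ)^n/2^L * ∑ b ∈ Finset.range B, q^b
        ≤ 2^n/2^L * (1/(1-q)) := mul_le_mul_of_nonneg_left hgeo (by positivity)
    _ = 2^n/((m:ℝ)+1) := by
        rw [h1mq]
        have hm1 : ((m:ℝ)+1) ≠ 0 := by positivity
        field_simp
  -- second term
  have hsum2 : (Q:ℝ)^B * (2:ℝ)^(n - L*B) ≤ (2:ℝ)^n * (2^L/((B:ℝ)*((m:ℝ)+1))) := by
    have a1 : n - L*B + L*B = n := by omega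
    have e1 : (2:ℝ)^(n - L*B) = 2^n / 2^(L*B) := by
      rw [eq_div_iff (by positivity), ← pow_add, a1]
    have e3 : q^B = (Q:ℝ)^B / 2^(L*B) := by
      rw [hqdef, div_pow, ← pow_mul]
    have hQB : (Q:ℝ)^B * (2:ℝ)^(n - L*B) = 2^n * q^B := by
      rw [e1, e3]
      field_simp
    rw [hQB]
    apply mul_le_mul_of_nonneg_left ?_ (by positivity)
    obtain ⟨p, hpdef⟩ : ∃ p : ℝ, p = ((m:ℝ)+1)/2^L := ⟨_, rfl⟩
    have hp0 : 0 < p := by rw [hpdef]; positivity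
    have hp1 : p ≤ 1 := by
      rw [hpdef, div_le_one h2Lpos]
      exact_mod_cast p4
    have hqp : q = 1 - p := by linarith [h1mq]
    have e5 : 1 + (B:ℝ)*p ≤ (1+p)^B := one_add_mul_le_pow (by linarith) B
    have e6 : q^B * (1+p)^B = (1 - p^2)^B := by
      rw [hqp, ← mul_pow]
      ring_nf
    have hpp : p^2 ≤ 1 := by
      have h1 : p*p ≤ 1*1 := mul_le_mul hp1 hp1 (le_of_lt hp0) zero_le_one
      calc p^2 = p*p := sq p
      _ ≤ 1*1 := h1
      _ = 1 := by norm_num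
    have e7 : (1 - p^2)^B ≤ 1 :=
      pow_le_one₀ (by linarith) (by linarith [sq_nonneg p])
    have e8 : q^B * (1 + (B:ℝ)*p) ≤ 1 := by
      calc q^B * (1 + (B:ℝ)*p) ≤ q^B * (1+p)^B :=
        mul_le_mul_of_nonneg_left e5 (pow_nonneg hq0 B)
      _ = (1 - p^2)^B := e6
      _ ≤ 1 := e7
    have hB0 : (0:ℝ) < (B:ℝ) := by exact_mod_cast p3
    have hBp : 0 < (B:ℝ)*p := mul_pos hB0 hp0
    calc q^B ≤ 1/(1 + (B:ℝ)*p) := by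
          rw [le_div_iff₀ (by linarith)]
          exact e8
    _ ≤ 1/((B:ℝ)*p) := one_div_le_one_div_of_le hBp (by linarith)
    _ = 2^L/((B:ℝ)*((m:ℝ)+1)) := by
        rw [hpdef]
        have hm1 : ((m:ℝ)+1) ≠ 0 := by positivity
        field_simp
  -- combine
  have hfinal1 : (C.ncard : ℝ) ≤ 2^n/((m:ℝ)+1) + 2^n * (2^L/((B:ℝ)*((m:ℝ)+1))) :=
    le_trans hc0 (add_le_add hsum1 hsum2)
  have ht1 : (0:ℝ) < (t:ℝ)+1 := by positivity
  have hm1r : (0:ℝ) < (m:ℝ)+1 := by positivity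
  have hA : (1:ℝ)/((m:ℝ)+1) ≤ 3/((t:ℝ)+1) := by
    rw [div_le_div_iff₀ hm1r ht1]
    have hp1' : ((t:ℝ)+1) ≤ 3*((m:ℝ)+1) := by exact_mod_cast p1
    linarith
  have hB0 : (0:ℝ) < (B:ℝ) := by exact_mod_cast p3
  have hBr : (0:ℝ) < (B:ℝ)*((m:ℝ)+1) := mul_pos hB0 hm1r
  have hB2 : (2:ℝ)^L/((B:ℝ)*((m:ℝ)+1)) ≤ 1/((t:ℝ)+1) := by
    rw [div_le_div_iff₀ hBr ht1]
    have hg : ((t:ℝ)+1)*2^L ≤ (B:ℝ)*((m:ℝ)+1) := by exact_mod_cast pG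
    linarith
  have hcomb : (C.ncard : ℝ) ≤ 4*2^n/((t:ℝ)+1) := by
    have h2n : (0:ℝ) ≤ 2^n := by positivity
    have b1 : (2:ℝ)^n/((m:ℝ)+1) = 2^n * (1/((m:ℝ)+1)) := by ring
    calc (C.ncard:ℝ) ≤ 2^n/((m:ℝ)+1) + 2^n*(2^L/((B:ℝ)*((m:ℝ)+1))) := hfinal1
    _ ≤ 2^n*(3/((t:ℝ)+1)) + 2^n*(1/((t:ℝ)+1)) := by
        rw [b1]
        exact add_le_add (mul_le_mul_of_nonneg_left hA h2n)
          (mul_le_mul_of_nonneg_left hB2 h2n)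
    _ = 4*2^n/((t:ℝ)+1) := by ring
  have hlogpos : 0 < Real.logb 2 n := by
    apply Real.logb_pos (by norm_num)
    have h2n : (2:ℝ) ≤ (n:ℝ) := by exact_mod_cast p8
    linarith
  have hlogle : Real.logb 2 n ≤ (t:ℝ)+1 := by
    have h1 : (n:ℝ) ≤ (2:ℝ)^(t+1) := by exact_mod_cast le_of_lt p5
    have hn0 : (0:ℝ) < (n:ℝ) := by
      have : (2:ℝ) ≤ (n:ℝ) := by exact_mod_cast p8
      linarith
    calc Real.logb 2 (n:ℝ) ≤ Real.logb 2 ((2:ℝ)^(t+1)) :=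
      Real.logb_le_logb_of_le (by norm_num) hn0 h1
    _ = ((t+1:ℕ):ℝ) * Real.logb 2 2 := Real.logb_pow 2 2 (t+1)
    _ = (t:ℝ)+1 := by
        rw [Real.logb_self_eq_one (by norm_num)]
        push_cast
        ring
  calc (C.ncard:ℝ) ≤ 4*2^n/((t:ℝ)+1) := hcomb
  _ ≤ 4*2^n/Real.logb 2 n :=
      div_le_div_of_nonneg_left (by positivity) hlogpos hlogle
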